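/- The Frobenius set F = {g ∈ J : g + C_X is a maximal saturated cone} is non-empty and finite. -/

import Mathlib

open scoped BigOperators RealInnerProductSpace
open Filter Topology

noncomputable section

/-- `Euc s` is the Euclidean space `ℝ^s`. -/
abbrev Euc (s : ℕ) := EuclideanSpace ℝ (Fin s)

/-- The additive semigroup `X₁ℕ + ⋯ + X_mℕ` generated by the vectors `X j`. -/
def sgOf {s : ℕ} {ι : Type*} [Fintype ι] (X : ι → Euc s) : Set (Euc s) :=
  {z | ∃ u : ι → ℕ, ∑ j, (u j : ℝ) • X j = z}

/-- The lattice `X₁ℤ + ⋯ + X_mℤ` generated by the vectors `X j`. -/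
def latOf {s : ℕ} {ι : Type*} [Fintype ι] (X : ι → Euc s) : Set (Euc s) :=
  {z | ∃ u : ι → ℤ, ∑ j, (u j : ℝ) • X j = z}

/-- The convex cone `X₁ℝ⁺ + ⋯ + X_mℝ⁺` generated by the vectors `X j`. -/
def coneOf {s : ℕ} {ι : Type*} [Fintype ι] (X : ι → Euc s) : Set (Euc s) :=
  {x | ∃ c : ι → ℝ, (∀ j, 0 ≤ c j) ∧ ∑ j, c j • X j = x}

/-- The multiplicity of `z`: the number of finite words `i₁…i_n` with
`X_{i₁} + ⋯ + X_{i_n} = z`. -/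
def mult {s : ℕ} {ι : Type*} [Fintype ι] (X : ι → Euc s) (z : Euc s) : ℕ :=
  Set.ncard {w : List ι | (w.map X).sum = z}

/-- The multiplicity extended to the cone: the minimum of `mult X z` over points
`z` of the semigroup nearest to `x`. -/
def multC {s : ℕ} {ι : Type*} [Fintype ι] (X : ι → Euc s) (x : Euc s) : ℕ :=
  sInf {n | ∃ z ∈ sgOf X, dist x z = Metric.infDist x (sgOf X) ∧ mult X z = n}

/-- All the vectors `X j` have integer coordinates. -/
def IntegralVecs {s : ℕ} {ι : Type*} (X : ι → Euc s) : Prop :=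
  ∀ j i, ∃ n : ℤ, X j i = (n : ℝ)

/-- The entropy `h(p) = -∑ p_j log p_j` of a probability vector. -/
def entropy {m : ℕ} (p : Fin m → ℝ) : ℝ := -∑ j, p j * Real.log (p j)

/-- The `p`-th iteration of `X`: all sums `X_{ω₁} + ⋯ + X_{ω_p}` over words `ω`. -/
def iter {s m : ℕ} (X : Fin m → Euc s) (p : ℕ) : (Fin p → Fin m) → Euc s :=
  fun ω => ∑ i, X (ω i)

namespace Frob

variable {s m : ℕ}

lemma coord_sum (X : Fin m → Euc s) (c : Fin m → ℝ) (i : Fin s) :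
    (∑ j, c j • X j) i = ∑ j, c j * X j i := by
  have h := map_sum (EuclideanSpace.projₗ (𝕜 := ℝ) i) (fun j => c j • X j) Finset.univ
  simp only [LinearMap.coe_comp, Function.comp_apply, EuclideanSpace.projₗ, PiLp.projₗ,
    LinearMap.proj_apply, LinearEquiv.coe_coe, WithLp.linearEquiv_apply,
    map_smul, Pi.smul_apply, smul_eq_mul] at h
  exact h

lemma cone_zero (X : Fin m → Euc s) : (0 : Euc s) ∈ coneOf X :=
  ⟨fun _ => 0, fun _ => le_refl 0, by simp⟩

lemma cone_add (X : Fin m → Euc s) {a b : Euc s} (ha : a ∈ coneOf X) (hb : b ∈ coneOf X) :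
    a + b ∈ coneOf X := by
  obtain ⟨c, hc, rfl⟩ := ha
  obtain ⟨d, hd, rfl⟩ := hb
  exact ⟨fun j => c j + d j, fun j => add_nonneg (hc j) (hd j), by
    simp [add_smul, Finset.sum_add_distrib]⟩

lemma sg_subset_lat (X : Fin m → Euc s) : sgOf X ⊆ latOf X := by
  rintro z ⟨u, rfl⟩
  exact ⟨fun j => (u j : ℤ), by push_cast; rfl⟩

lemma inner_comb (X : Fin m → Euc s) (α : Euc s) (c : Fin m → ℝ) :
    ⟪∑ j, c j • X j, α⟫ = ∑ j, c j * ⟪X j, α⟫ := by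
  rw [sum_inner]
  exact Finset.sum_congr rfl fun j _ => real_inner_smul_left _ _ _

lemma inner_cone_nonneg (X : Fin m → Euc s) (α : Euc s) (hα : ∀ j, 0 < ⟪X j, α⟫)
    {c : Euc s} (hc : c ∈ coneOf X) : 0 ≤ ⟪c, α⟫ := by
  obtain ⟨t, ht, rfl⟩ := hc
  rw [inner_comb]
  exact Finset.sum_nonneg fun j _ => mul_nonneg (ht j) (hα j).le

lemma cone_eq_zero (X : Fin m → Euc s) (α : Euc s) (hα : ∀ j, 0 < ⟪X j, α⟫)
    {c : Euc s} (hc : c ∈ coneOf X) (h : ⟪c, α⟫ = 0) : c = 0 := by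
  obtain ⟨t, ht, rfl⟩ := hc
  rw [inner_comb] at h
  have hz := (Finset.sum_eq_zero_iff_of_nonneg
    (fun j _ => mul_nonneg (ht j) (hα j).le)).1 h
  refine Finset.sum_eq_zero fun j _ => ?_
  rcases mul_eq_zero.1 (hz j (Finset.mem_univ j)) with h' | h'
  · rw [h', zero_smul]
  · exact absurd h' (hα j).ne'

lemma int_comb_mem_sg (X : Fin m → Euc s) {e : Fin m → ℤ} (he : ∀ j, 0 ≤ e j) :
    ∑ j, ((e j : ℤ) : ℝ) • X j ∈ sgOf X := by
  refine ⟨fun j => (e j).toNat, Finset.sum_congr rfl fun j _ => ?_⟩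
  have : (((e j).toNat : ℕ) : ℝ) = ((e j : ℤ) : ℝ) := by
    exact_mod_cast congrArg (fun n : ℤ => (n : ℝ)) (Int.toNat_of_nonneg (he j))
  rw [this]

lemma exists_sat (X : Fin m → Euc s) (hint : IntegralVecs X) :
    ∃ g ∈ sgOf X, ∀ z ∈ latOf X, (∃ c ∈ coneOf X, g + c = z) → z ∈ sgOf X := by
  classical
  choose A hA using hint
  set W : Set (Euc s) := {w | w ∈ latOf X ∧
      ∃ t : Fin m → ℝ, (∀ j, 0 ≤ t j ∧ t j ≤ 1) ∧ ∑ j, t j • X j = w} with hWdef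
  -- W is finite
  have hWfin : W.Finite := by
    have hsub : W ⊆ (fun v : Fin s → ℤ =>
        (WithLp.equiv 2 (Fin s → ℝ)).symm (fun i => (v i : ℝ))) ''
        (Set.univ.pi fun i : Fin s => Set.Icc (-(∑ j, |A j i|)) (∑ j, |A j i|)) := by
      rintro w ⟨⟨a, ha⟩, t, ht, htw⟩
      have hcoord : ∀ i, w i = ((∑ j, a j * A j i : ℤ) : ℝ) := by
        intro i
        rw [← ha, coord_sum]
        push_cast
        exact Finset.sum_congr rfl fun j _ => by rw [hA]
      have hbound : ∀ i, |(∑ j, a j * A j i : ℤ)| ≤ ∑ j, |A j i| := by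
        intro i
        have h1 : w i = ∑ j, t j * (A j i : ℝ) := by
          rw [← htw, coord_sum]
          exact Finset.sum_congr rfl fun j _ => by rw [hA]
        have habs : |((∑ j, a j * A j i : ℤ) : ℝ)| ≤ ((∑ j, |A j i| : ℤ) : ℝ) := by
          rw [← hcoord i, h1]
          push_cast
          calc |∑ j, t j * (A j i : ℝ)| ≤ ∑ j, |t j * (A j i : ℝ)| :=
                Finset.abs_sum_le_sum_abs _ _
            _ ≤ ∑ j, |(A j i : ℝ)| := Finset.sum_le_sum fun j _ => by
                rw [abs_mul]
                have h2 : |t j| ≤ 1 := abs_le.2 ⟨by linarith [(ht j).1], (ht j).2⟩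
                nlinarith [abs_nonneg (A j i : ℝ)]
        exact_mod_cast habs
      refine ⟨fun i => ∑ j, a j * A j i, fun i _ => ?_, ?_⟩
      · exact Set.mem_Icc.2 (abs_le.1 (hbound i))
      · refine PiLp.ext fun i => ?_
        show (WithLp.equiv 2 (Fin s → ℝ)).symm
          (fun i' => ((∑ j, a j * A j i' : ℤ) : ℝ)) i = w i
        rw [WithLp.equiv_symm_apply]
        exact (hcoord i).symm
    exact Set.Finite.subset (Set.Finite.image _
      (Set.Finite.pi fun i => Set.finite_Icc _ _)) hsub
  -- pick integer representatives for elements of W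
  have hrep : ∀ w ∈ W, ∃ aw : Fin m → ℤ, ∑ j, ((aw j : ℤ) : ℝ) • X j = w := fun w hw => hw.1
  choose! a ha using hrep
  set N : ℕ := hWfin.toFinset.sup
    (fun w => Finset.univ.sup fun j => (-(a w j)).toNat) with hNdef
  refine ⟨∑ j, ((N : ℕ) : ℝ) • X j, ⟨fun _ => N, rfl⟩, ?_⟩
  rintro z ⟨az, haz⟩ ⟨cc, ⟨t, ht0, rfl⟩, hgc⟩
  set d : Fin m → ℕ := fun j => ⌊t j⌋₊ with hd
  set w : Euc s := ∑ j, (t j - (d j : ℝ)) • X j with hwdef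
  have hwW : w ∈ W := by
    constructor
    · refine ⟨fun j => az j - (d j : ℤ) - (N : ℤ), ?_⟩
      push_cast
      simp only [sub_smul, Finset.sum_sub_distrib]
      rw [haz, ← hgc, hwdef]
      simp only [sub_smul, Finset.sum_sub_distrib]
      abel
    · refine ⟨fun j => t j - (d j : ℝ), fun j => ⟨?_, ?_⟩, hwdef.symm⟩
      · exact sub_nonneg.2 (Nat.floor_le (ht0 j))
      · have := Nat.lt_floor_add_one (t j)
        simp only [hd]
        linarith
  have haw := ha w hwW
  have hN : ∀ j, (-(a w j)).toNat ≤ N := by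
    intro j
    calc (-(a w j)).toNat ≤ Finset.univ.sup fun j' => (-(a w j')).toNat :=
          Finset.le_sup (f := fun j' => (-(a w j')).toNat) (Finset.mem_univ j)
      _ ≤ N := Finset.le_sup (f := fun w => Finset.univ.sup fun j' => (-(a w j')).toNat)
          (hWfin.mem_toFinset.2 hwW)
  have henneg : ∀ j, 0 ≤ (N : ℤ) + (d j : ℤ) + a w j := by
    intro j
    have h1 : (-(a w j) : ℤ) ≤ ((-(a w j)).toNat : ℤ) := Int.self_le_toNat _
    have h2 : (((-(a w j)).toNat : ℕ) : ℤ) ≤ (N : ℤ) := by exact_mod_cast hN j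
    have h3 : (0 : ℤ) ≤ (d j : ℤ) := Int.ofNat_nonneg _
    omega
  have hz : ∑ j, (((N : ℤ) + (d j : ℤ) + a w j : ℤ) : ℝ) • X j = z := by
    push_cast
    simp only [add_smul, Finset.sum_add_distrib]
    rw [haw, hwdef]
    simp only [sub_smul, Finset.sum_sub_distrib]
    rw [← hgc]
    abel
  have := int_comb_mem_sg X henneg
  rwa [hz] at this

end Frob

/-- The Frobenius set `F = {g ∈ J : g + C_X is a maximal saturated cone}` is
non-empty and finite. -/
theorem stmt1 {s m : ℕ} (hs : 1 ≤ s) (hm : 2 ≤ m) (X : Fin m → Euc s)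
    (hint : IntegralVecs X)
    (hspan : Submodule.span ℝ (Set.range X) = ⊤)
    (α : Euc s) (hα : ∀ j, 0 < ⟪X j, α⟫) :
    let F : Set (Euc s) :=
      {g | g ∈ sgOf X ∧
        ((g + ·) '' coneOf X) ∩ sgOf X = ((g + ·) '' coneOf X) ∩ latOf X ∧
        ∀ g' ∈ sgOf X,
          ((g' + ·) '' coneOf X) ∩ sgOf X = ((g' + ·) '' coneOf X) ∩ latOf X →
          (g + ·) '' coneOf X ⊆ (g' + ·) '' coneOf X →
          (g + ·) '' coneOf X = (g' + ·) '' coneOf X}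
    F.Nonempty ∧ F.Finite := by
  classical
  intro F
  -- abbreviation for the pointwise saturation property
  set SatP : Euc s → Prop :=
    fun g => ∀ z ∈ latOf X, (∃ c ∈ coneOf X, g + c = z) → z ∈ sgOf X with hSatP
  -- pointwise saturation implies the set-equality form
  have hsat_of : ∀ g : Euc s, SatP g →
      ((g + ·) '' coneOf X) ∩ sgOf X = ((g + ·) '' coneOf X) ∩ latOf X := by
    intro g h
    apply Set.Subset.antisymm
    · rintro z ⟨hz1, hz2⟩
      exact ⟨hz1, Frob.sg_subset_lat X hz2⟩
    · rintro z ⟨hz1, hz2⟩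
      rcases hz1 with ⟨c, hc, hcz⟩
      exact ⟨⟨c, hc, hcz⟩, h z hz2 ⟨c, hc, hcz⟩⟩
  -- the set-equality form implies the pointwise saturation property
  have hsat_to : ∀ g : Euc s,
      ((g + ·) '' coneOf X) ∩ sgOf X = ((g + ·) '' coneOf X) ∩ latOf X → SatP g := by
    intro g hEq z hzL hc
    rcases hc with ⟨c, hc, hcz⟩
    have hmem : z ∈ ((g + ·) '' coneOf X) ∩ latOf X := ⟨⟨c, hc, hcz⟩, hzL⟩
    rw [← hEq] at hmem
    exact hmem.2
  -- each shifted cone contains its tip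
  have self_mem : ∀ g : Euc s, g ∈ (g + ·) '' coneOf X :=
    fun g => ⟨0, Frob.cone_zero X, add_zero g⟩
  -- equality of shifted cones forces equality of tips
  have tip : ∀ g g' : Euc s,
      (g + ·) '' coneOf X = (g' + ·) '' coneOf X → g = g' := by
    intro g g' h
    have h1 : g ∈ (g' + ·) '' coneOf X := by rw [← h]; exact self_mem g
    have h2 : g' ∈ (g + ·) '' coneOf X := by rw [h]; exact self_mem g'
    rcases h1 with ⟨c1, hc1, hc1e⟩
    rcases h2 with ⟨c2, hc2, hc2e⟩
    have hc1e' : g' + c1 = g := hc1e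
    have hc2e' : g + c2 = g' := hc2e
    have hsum : c1 + c2 = 0 := by
      have hh : g' + (c1 + c2) = g' + 0 := by
        rw [add_zero, ← add_assoc, hc1e', hc2e']
      exact add_left_cancel hh
    have hinner : ⟪c1, α⟫ + ⟪c2, α⟫ = 0 := by
      rw [← inner_add_left, hsum, inner_zero_left]
    have hn1 := Frob.inner_cone_nonneg X α hα hc1
    have hn2 := Frob.inner_cone_nonneg X α hα hc2
    have h10 : ⟪c1, α⟫ = 0 := by linarith
    have hz1 : c1 = 0 := Frob.cone_eq_zero X α hα hc1 h10
    rw [← hc1e', hz1, add_zero]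
  -- a nonnegative translation gives cone inclusion
  have subset_of : ∀ g g' : Euc s, (∃ c ∈ coneOf X, g' + c = g) →
      (g + ·) '' coneOf X ⊆ (g' + ·) '' coneOf X := by
    rintro g g' ⟨c, hc, rfl⟩ z ⟨c2, hc2, rfl⟩
    exact ⟨c + c2, Frob.cone_add X hc hc2, (add_assoc _ _ _).symm⟩
  constructor
  -- Nonemptiness
  · obtain ⟨g₀, hg₀J, hg₀sat⟩ := Frob.exists_sat X hint
    set B : ℝ := ⟪g₀, α⟫ with hB
    have hmne : (Finset.univ : Finset (Fin m)).Nonempty :=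
      ⟨⟨0, by omega⟩, Finset.mem_univ _⟩
    set ε : ℝ := Finset.univ.inf' hmne (fun j => ⟪X j, α⟫) with hεdef
    have hε : 0 < ε := (Finset.lt_inf'_iff hmne).2 fun j _ => hα j
    set K : ℕ := ⌈B / ε⌉₊ with hK
    set U : Set (Fin m → ℕ) :=
      {u | SatP (∑ j, (u j : ℝ) • X j) ∧ ⟪∑ j, (u j : ℝ) • X j, α⟫ ≤ B} with hU
    have hUfin : U.Finite := by
      have hsub : U ⊆ Set.univ.pi fun _ : Fin m => Set.Iic K := by
        rintro u ⟨_, hub⟩ j _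
        have h1 : ⟪∑ j, (u j : ℝ) • X j, α⟫ = ∑ j, (u j : ℝ) * ⟪X j, α⟫ :=
          Frob.inner_comb X α _
        have h2 : (u j : ℝ) * ε ≤ (u j : ℝ) * ⟪X j, α⟫ :=
          mul_le_mul_of_nonneg_left (Finset.inf'_le _ (Finset.mem_univ j))
            (Nat.cast_nonneg _)
        have h3 : (u j : ℝ) * ⟪X j, α⟫ ≤ ∑ j, (u j : ℝ) * ⟪X j, α⟫ :=
          Finset.single_le_sum (f := fun k => (u k : ℝ) * ⟪X k, α⟫)
            (fun k _ => mul_nonneg (Nat.cast_nonneg _) (hα k).le) (Finset.mem_univ j)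
        have h4 : (u j : ℝ) ≤ B / ε := by
          rw [le_div_iff₀ hε]
          calc (u j : ℝ) * ε ≤ ∑ j, (u j : ℝ) * ⟪X j, α⟫ := le_trans h2 h3
            _ ≤ B := by rw [← h1]; exact hub
        have h5 : (u j : ℝ) ≤ (K : ℝ) := le_trans h4 (Nat.le_ceil _)
        exact Set.mem_Iic.2 (by exact_mod_cast h5)
      exact Set.Finite.subset (Set.Finite.pi fun _ => Set.finite_Iic K) hsub
    have hUne : U.Nonempty := by
      obtain ⟨u₀, hu₀⟩ := hg₀J
      exact ⟨u₀, by rw [hu₀]; exact hg₀sat, by rw [hu₀]⟩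
    obtain ⟨u₁, hu₁U, hmin⟩ :=
      Set.exists_min_image U (fun u => ⟪∑ j, (u j : ℝ) • X j, α⟫) hUfin hUne
    refine ⟨∑ j, (u₁ j : ℝ) • X j, ⟨u₁, rfl⟩, hsat_of _ hu₁U.1, ?_⟩
    intro g' hg'J hg'sat hsub
    obtain ⟨c, hc, hce⟩ := hsub (self_mem _)
    have hce' : g' + c = ∑ j, (u₁ j : ℝ) • X j := hce
    obtain ⟨u', hu'⟩ := hg'J
    have hcnn := Frob.inner_cone_nonneg X α hα hc
    have hgsum : ⟪g', α⟫ + ⟪c, α⟫ = ⟪∑ j, (u₁ j : ℝ) • X j, α⟫ := by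
      rw [← inner_add_left, hce']
    have hu'U : u' ∈ U := by
      refine ⟨by rw [hu']; exact hsat_to g' hg'sat, ?_⟩
      rw [hu']
      have := hu₁U.2
      linarith
    have hmin' := hmin u' hu'U
    rw [hu'] at hmin'
    have hc0 : ⟪c, α⟫ = 0 := by linarith
    have hcz : c = 0 := Frob.cone_eq_zero X α hα hc hc0
    have hg'eq : g' = ∑ j, (u₁ j : ℝ) • X j := by rw [← hce', hcz, add_zero]
    rw [hg'eq]
  -- Finiteness
  · by_contra hFinf
    have hinf : F.Infinite := hFinf
    set e := hinf.natEmbedding with he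
    have hmem : ∀ n, (e n : Euc s) ∈ F := fun n => (e n).2
    have hrepn : ∀ n, ∃ u : Fin m → ℕ, ∑ j, (u j : ℝ) • X j = (e n : Euc s) :=
      fun n => (hmem n).1
    choose u hu using hrepn
    have hpwo : WellQuasiOrdered (α := Fin m → ℕ) (· ≤ ·) := wellQuasiOrdered_le
    obtain ⟨i, j, hij, hle⟩ := hpwo u
    have hlek : ∀ k, u i k ≤ u j k := fun k => hle k
    have hdiff : ∃ c ∈ coneOf X, (e i : Euc s) + c = (e j : Euc s) := by
      refine ⟨∑ k, ((u j k - u i k : ℕ) : ℝ) • X k,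
        ⟨fun k => ((u j k - u i k : ℕ) : ℝ), fun k => Nat.cast_nonneg _, rfl⟩, ?_⟩
      rw [← hu i, ← hu j, ← Finset.sum_add_distrib]
      refine Finset.sum_congr rfl fun k _ => ?_
      rw [← add_smul]
      congr 1
      rw [Nat.cast_sub (hlek k)]
      ring
    have hsubij : ((e j : Euc s) + ·) '' coneOf X ⊆ ((e i : Euc s) + ·) '' coneOf X :=
      subset_of _ _ hdiff
    have heq := (hmem j).2.2 (e i : Euc s) (hmem i).1 (hmem i).2.1 hsubij
    have htips : (e j : Euc s) = (e i : Euc s) := tip _ _ heq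
    have : e j = e i := Subtype.ext htips
    exact absurd (e.injective this) (Nat.ne_of_lt hij).symm



end
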